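/- Let N_c and N_e be natural numbers with 0 ≤ N_e ≤ N_c and N_c ≥ 1, and let p ∈ {0, 1, …, N_c−1}. Then Σ_{k=0, k≠p}^{N_c−1} Σ_{i=N_e}^{N_c−1} Σ_{r=N_e}^{N_c−1} exp( 2πi (k − p)(i − r) / N_c ) = N_e (N_c − N_e), where exp denotes the complex exponential and i the imaginary unit. -/

import Mathlib

open Finset Complex

/-- Exponential sum identity (Appendix C, ICI power):
`∑_{k≠p} ∑_{i=N_e}^{N_c−1} ∑_{r=N_e}^{N_c−1} exp(2πi(k−p)(i−r)/N_c) = N_e (N_c − N_e)`. -/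
theorem stmt_5 (Nc Ne : ℕ) (hNe : Ne ≤ Nc) (hNc : 1 ≤ Nc) (p : ℕ) (hp : p < Nc) :
    ∑ k ∈ (Finset.range Nc).erase p, ∑ i ∈ Finset.Ico Ne Nc, ∑ r ∈ Finset.Ico Ne Nc,
        Complex.exp (2 * Real.pi * Complex.I * ((k : ℂ) - (p : ℂ)) * ((i : ℂ) - (r : ℂ)) / (Nc : ℂ))
      = (Ne : ℂ) * ((Nc : ℂ) - (Ne : ℂ)) := by
  have hNcC : (Nc : ℂ) ≠ 0 := Nat.cast_ne_zero.mpr (by omega)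
  have h2pI : (2 : ℂ) * Real.pi * I ≠ 0 := by
    simp [Real.pi_ne_zero, Complex.I_ne_zero]
  -- inner sum over k
  have key : ∀ i ∈ Finset.Ico Ne Nc, ∀ r ∈ Finset.Ico Ne Nc,
      ∑ k ∈ (Finset.range Nc).erase p,
        Complex.exp (2 * Real.pi * Complex.I * ((k : ℂ) - (p : ℂ)) * ((i : ℂ) - (r : ℂ)) / (Nc : ℂ))
      = if i = r then (Nc : ℂ) - 1 else -1 := by
    intro i hi r hr
    simp only [Finset.mem_Ico] at hi hr
    set z : ℂ := 2 * Real.pi * Complex.I * ((i : ℂ) - r) / Nc with hz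
    have hterm : ∀ k : ℕ,
        Complex.exp (2 * Real.pi * Complex.I * ((k : ℂ) - (p : ℂ)) * ((i : ℂ) - r) / Nc)
        = Complex.exp z ^ ((k : ℤ) - p) := by
      intro k
      rw [← Complex.exp_int_mul]
      congr 1
      rw [hz]
      push_cast
      field_simp
    have hwne : Complex.exp z ≠ 0 := Complex.exp_ne_zero z
    by_cases hir : i = r
    · subst hir
      have hz0 : z = 0 := by simp [hz]
      simp only [if_pos rfl]
      have : ∀ k ∈ (Finset.range Nc).erase p,
          Complex.exp (2 * Real.pi * Complex.I * ((k : ℂ) - (p : ℂ)) * ((i : ℂ) - i) / Nc) = 1 := by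
        intro k _
        rw [hterm k, hz0]
        simp
      rw [Finset.sum_congr rfl this, Finset.sum_const]
      rw [Finset.card_erase_of_mem (Finset.mem_range.mpr hp), Finset.card_range]
      simp [Nat.cast_sub hNc]
    · -- w ≠ 1
      have hw1 : Complex.exp z ≠ 1 := by
        intro h
        rw [Complex.exp_eq_one_iff] at h
        obtain ⟨n, hn⟩ := h
        have : ((i : ℂ) - r) = (n : ℂ) * Nc := by
          rw [hz, div_eq_iff hNcC] at hn
          have := mul_right_cancel₀ h2pI (by linear_combination hn : ((i:ℂ) - r) * (2 * Real.pi * I) = ((n : ℂ) * Nc) * (2 * Real.pi * I))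
          exact this
        have hint : (i : ℤ) - r = n * Nc := by exact_mod_cast this
        have h1 : (i : ℤ) - r < Nc := by omega
        have h2 : -(Nc : ℤ) < (i : ℤ) - r := by omega
        have hn0 : n = 0 := by
          rcases lt_trichotomy n 0 with h | h | h
          · nlinarith [hint, h2, (by exact_mod_cast hNc : (1:ℤ) ≤ Nc)]
          · exact h
          · nlinarith [hint, h1, (by exact_mod_cast hNc : (1:ℤ) ≤ Nc)]
        rw [hn0] at hint
        simp at hint
        omega
      have hpow : Complex.exp z ^ Nc = 1 := by
        rw [← Complex.exp_nat_mul]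
        have h1 : (Nc : ℂ) * z = ((((i : ℤ) - (r : ℤ)) : ℤ) : ℂ) * (2 * Real.pi * I) := by
          rw [hz]; push_cast; field_simp
        rw [h1]
        exact Complex.exp_int_mul_two_pi_mul_I ((i : ℤ) - (r : ℤ))
      have hfull : ∑ k ∈ Finset.range Nc,
          Complex.exp (2 * Real.pi * Complex.I * ((k : ℂ) - (p : ℂ)) * ((i : ℂ) - r) / Nc) = 0 := by
        have : ∀ k ∈ Finset.range Nc,
            Complex.exp (2 * Real.pi * Complex.I * ((k : ℂ) - (p : ℂ)) * ((i : ℂ) - r) / Nc)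
            = Complex.exp z ^ (-(p:ℤ)) * Complex.exp z ^ k := by
          intro k _
          rw [hterm k, ← zpow_natCast (Complex.exp z) k, ← zpow_add₀ hwne]
          congr 1; ring
        rw [Finset.sum_congr rfl this, ← Finset.mul_sum, geom_sum_eq hw1, hpow]
        simp
      rw [if_neg hir]
      rw [Finset.sum_erase_eq_sub (Finset.mem_range.mpr hp), hfull]
      have : Complex.exp (2 * Real.pi * Complex.I * ((p : ℂ) - (p : ℂ)) * ((i : ℂ) - r) / Nc) = 1 := by
        simp
      rw [this]
      ring
  -- swap the sums
  have hswap : ∑ k ∈ (Finset.range Nc).erase p, ∑ i ∈ Finset.Ico Ne Nc, ∑ r ∈ Finset.Ico Ne Nc,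
        Complex.exp (2 * Real.pi * Complex.I * ((k : ℂ) - (p : ℂ)) * ((i : ℂ) - (r : ℂ)) / (Nc : ℂ))
      = ∑ i ∈ Finset.Ico Ne Nc, ∑ r ∈ Finset.Ico Ne Nc, ∑ k ∈ (Finset.range Nc).erase p,
        Complex.exp (2 * Real.pi * Complex.I * ((k : ℂ) - (p : ℂ)) * ((i : ℂ) - (r : ℂ)) / (Nc : ℂ)) := by
    rw [Finset.sum_comm]
    exact Finset.sum_congr rfl fun i _ => Finset.sum_comm
  rw [hswap]
  rw [Finset.sum_congr rfl fun i hi => Finset.sum_congr rfl fun r hr => key i hi r hr]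
  have hrow : ∀ i ∈ Finset.Ico Ne Nc,
      ∑ r ∈ Finset.Ico Ne Nc, (if i = r then (Nc : ℂ) - 1 else -1) = (Ne : ℂ) := by
    intro i hi
    have : ∀ r, (if i = r then (Nc : ℂ) - 1 else -1) = (if i = r then (Nc : ℂ) else 0) - 1 := by
      intro r; split <;> ring
    simp_rw [this, Finset.sum_sub_distrib, Finset.sum_ite_eq, if_pos hi, Finset.sum_const,
      Nat.card_Ico, nsmul_eq_mul]
    push_cast [Nat.cast_sub hNe]
    ring
  rw [Finset.sum_congr rfl hrow, Finset.sum_const, Nat.card_Ico, nsmul_eq_mul]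
  push_cast [Nat.cast_sub hNe]
  ring
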